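/- Let A be an associative supercommutative superalgebra, d an even derivation of A, and c ∈ A₀. Then the product u∘v = u·d(v) + c·u·v makes A into a Novikov superalgebra. -/

import Mathlib

/-- A Novikov superalgebra over ℂ: a ℤ₂-graded vector space `V = A 0 ⊕ A 1`
with a bilinear product respecting the grading, satisfying the graded
left-symmetry and graded right-commutativity identities. -/
structure NovikovSuperAlgebra (V : Type*) [AddCommGroup V] [Module ℂ V] where
  mul : V →ₗ[ℂ] V →ₗ[ℂ] V
  grading : ZMod 2 → Submodule ℂ V
  spanning : ∀ x : V, ∃ x0 ∈ grading 0, ∃ x1 ∈ grading 1, x = x0 + x1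
  indep : ∀ x : V, x ∈ grading 0 → x ∈ grading 1 → x = 0
  mul_mem : ∀ i j : ZMod 2, ∀ u ∈ grading i, ∀ v ∈ grading j, mul u v ∈ grading (i + j)
  super_left_sym : ∀ i j : ZMod 2, ∀ u ∈ grading i, ∀ v ∈ grading j, ∀ w : V,
    mul (mul u v) w - mul u (mul v w)
      = ((-1 : ℂ) ^ (i.val * j.val)) • (mul (mul v u) w - mul v (mul u w))
  super_right_comm : ∀ i j : ZMod 2, ∀ u ∈ grading i, ∀ v ∈ grading j, ∀ w : V,
    mul (mul w u) v = ((-1 : ℂ) ^ (i.val * j.val)) • mul (mul w v) u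

/-- The (ungraded) Novikov algebra identities for a bilinear product. -/
def IsNovikovMul {V : Type*} [AddCommGroup V] [Module ℂ V]
    (mul : V →ₗ[ℂ] V →ₗ[ℂ] V) : Prop :=
  (∀ x y z : V, mul (mul x y) z - mul x (mul y z) = mul (mul y x) z - mul y (mul x z)) ∧
  (∀ x y z : V, mul (mul z x) y = mul (mul z y) x)

/-- Supercommutator of elements of parities `i`, `j`. -/
def sbr {V : Type*} [AddCommGroup V] [Module ℂ V]
    (mul : V →ₗ[ℂ] V →ₗ[ℂ] V) (i j : ZMod 2) (u v : V) : V :=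
  mul u v - ((-1 : ℂ) ^ (i.val * j.val)) • mul v u

/-- An associative supercommutative superalgebra over ℂ. -/
structure SuperCommAlg (V : Type*) [AddCommGroup V] [Module ℂ V] where
  mul : V →ₗ[ℂ] V →ₗ[ℂ] V
  grading : ZMod 2 → Submodule ℂ V
  spanning : ∀ x : V, ∃ x0 ∈ grading 0, ∃ x1 ∈ grading 1, x = x0 + x1
  indep : ∀ x : V, x ∈ grading 0 → x ∈ grading 1 → x = 0
  mul_mem : ∀ i j : ZMod 2, ∀ a ∈ grading i, ∀ b ∈ grading j, mul a b ∈ grading (i + j)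
  assoc : ∀ x y z : V, mul (mul x y) z = mul x (mul y z)
  scomm : ∀ i j : ZMod 2, ∀ a ∈ grading i, ∀ b ∈ grading j,
    mul a b = ((-1 : ℂ) ^ (i.val * j.val)) • mul b a


section NovikovHelpers

variable {V : Type*} [AddCommGroup V] [Module ℂ V]

lemma sc_central (S : SuperCommAlg V) {a : V} (ha : a ∈ S.grading 0) (x : V) :
    S.mul a x = S.mul x a := by
  obtain ⟨x0, h0, x1, h1, rfl⟩ := S.spanning x
  have e0 := S.scomm 0 0 a ha x0 h0
  have e1 := S.scomm 0 1 a ha x1 h1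
  simp only [ZMod.val_zero, zero_mul, pow_zero, one_smul] at e0 e1
  simp [map_add, e0, e1]

lemma sc_key2 (S : SuperCommAlg V) (i j : ZMod 2) {a b : V}
    (ha : a ∈ S.grading i) (hb : b ∈ S.grading j) (x : V) :
    S.mul a (S.mul b x) = ((-1 : ℂ) ^ (i.val * j.val)) • S.mul b (S.mul a x) := by
  rw [← S.assoc, S.scomm i j a ha b hb, LinearMap.map_smul₂, S.assoc]

lemma sc_move (S : SuperCommAlg V) {a : V} (ha : a ∈ S.grading 0) (x y : V) :
    S.mul x (S.mul a y) = S.mul a (S.mul x y) := by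
  rw [← S.assoc, ← sc_central S ha x, S.assoc]

end NovikovHelpers

/-- if `d` is an even derivation of an associative supercommutative
superalgebra and `c` is an even element, then `u∘v = u·d(v) + c·u·v` makes the
space into a Novikov superalgebra (same grading). -/
theorem derivation_product_is_novikov_super {V : Type*} [AddCommGroup V] [Module ℂ V]
    (S : SuperCommAlg V) (d : V →ₗ[ℂ] V)
    (hd_even : ∀ i : ZMod 2, ∀ a ∈ S.grading i, d a ∈ S.grading i)
    (hd_leibniz : ∀ a b : V, d (S.mul a b) = S.mul (d a) b + S.mul a (d b))
    (c : V) (hc : c ∈ S.grading 0) :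
    ∃ N : NovikovSuperAlgebra V, N.grading = S.grading ∧
      ∀ u v : V, N.mul u v = S.mul u (d v) + S.mul c (S.mul u v) := by
  set m := S.mul with hm
  set M : V →ₗ[ℂ] V →ₗ[ℂ] V := LinearMap.mk₂ ℂ (fun u v => m u (d v) + m c (m u v))
    (by intro x y z; simp only [map_add, LinearMap.add_apply]; abel)
    (by intro r x z; simp only [LinearMap.map_smul₂, map_smul, LinearMap.smul_apply, smul_add])
    (by intro x y z; simp only [map_add, LinearMap.add_apply]; abel)
    (by intro x r z; simp only [map_smul, LinearMap.smul_apply, smul_add]) with hM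
  have hMapp : ∀ u v : V, M u v = m u (d v) + m c (m u v) := fun u v => rfl
  have hdc : d c ∈ S.grading 0 := hd_even 0 c hc
  refine ⟨⟨M, S.grading, S.spanning, S.indep, ?_, ?_, ?_⟩, rfl, hMapp⟩
  · -- mul_mem
    intro i j u hu v hv
    rw [hMapp]
    refine Submodule.add_mem _ (S.mul_mem i j u hu (d v) (hd_even j v hv)) ?_
    have := S.mul_mem 0 (i + j) c hc (m u v) (S.mul_mem i j u hu v hv)
    rwa [zero_add] at this
  · -- super_left_sym
    intro i j u hu v hv w
    simp only [hMapp, hd_leibniz, map_add, LinearMap.add_apply,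
      (show ∀ x y z : V, m (m x y) z = m x (m y z) from S.assoc)]
    have mv1 : m u (m (d c) (m v w)) = m (d c) (m u (m v w)) := sc_move S hdc ..
    have mv2 : m u (m c (m (d v) w)) = m c (m u (m (d v) w)) := sc_move S hc ..
    have mv3 : m u (m c (m v (d w))) = m c (m u (m v (d w))) := sc_move S hc ..
    have mv4 : m u (m c (m v w)) = m c (m u (m v w)) := sc_move S hc ..
    have mv1s : m v (m (d c) (m u w)) = m (d c) (m v (m u w)) := sc_move S hdc ..
    have mv2s : m v (m c (m (d u) w)) = m c (m v (m (d u) w)) := sc_move S hc ..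
    have mv3s : m v (m c (m u (d w))) = m c (m v (m u (d w))) := sc_move S hc ..
    have mv4s : m v (m c (m u w)) = m c (m v (m u w)) := sc_move S hc ..
    rw [mv1, mv2, mv3, mv4, mv1s, mv2s, mv3s, mv4s]
    have k1 : m u (m v (d (d w))) = ((-1 : ℂ) ^ (i.val * j.val)) • m v (m u (d (d w))) :=
      sc_key2 S i j hu hv _
    have k2 : m u (m v w) = ((-1 : ℂ) ^ (i.val * j.val)) • m v (m u w) :=
      sc_key2 S i j hu hv w
    have k3 : m u (m v (d w)) = ((-1 : ℂ) ^ (i.val * j.val)) • m v (m u (d w)) :=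
      sc_key2 S i j hu hv _
    rw [k1, k2, k3]
    simp only [map_smul, smul_add, smul_sub]
    abel
  · -- super_right_comm
    intro i j u hu v hv w
    have hdu : d u ∈ S.grading i := hd_even i u hu
    have hdv : d v ∈ S.grading j := hd_even j v hv
    simp only [hMapp, map_add, LinearMap.add_apply,
      (show ∀ x y z : V, m (m x y) z = m x (m y z) from S.assoc)]
    rw [S.scomm i j (d u) hdu (d v) hdv, S.scomm i j u hu (d v) hdv,
      S.scomm i j (d u) hdu v hv, S.scomm i j u hu v hv]
    simp only [map_smul, smul_add]
    abel
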